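/- In the diamond-chain graph built from positive integers s₁, …, s_n, an integer W > max_i s_i, and a real β with 0 < β < 1: for every subset A ⊆ {1,…,n}, the s–t path that goes through u_i exactly for i ∈ A (and through u'_i otherwise) has cost ∑_{i∈A}(s_i + (W−s_i)/β) + ∑_{i∉A}(−s_i + (W+s_i)/β), and this cost equals n·W/β if and only if ∑_{i∈A} s_i = ∑_{i∉A} s_i. Consequently, the number of directed s–t paths of cost exactly n·W/β in the diamond-chain graph equals the number of subsets A ⊆ {1,…,n} with ∑_{i∈A} s_i = ∑_{i∉A} s_i. -/

import Mathlib

/-!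
Common definitions for time-inconsistent planning models (Kleinberg–Oren).
A task graph is given by a finite vertex type `V`, an edge relation
`E : V → V → Prop` and edge weights `w : V → V → ℝ`.  A directed path is
represented by the list of its vertices (nonempty, consecutive vertices joined
by edges, no repeated vertices).
-/

variable {V : Type*}

/-- The (real) cost of a path: the sum of the weights of its edges. -/
def pathCost (w : V → V → ℝ) (p : List V) : ℝ :=
  ((p.zip p.tail).map fun e => w e.1 e.2).sum

/-- `p` is a directed path from `a` to `b` in the graph with edge relation `E`. -/
def IsPathOn (E : V → V → Prop) (a b : V) (p : List V) : Prop :=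
  p.head? = some a ∧ p.getLast? = some b ∧ p.Chain' E ∧ p.Nodup

/-- The perceived cost of a path with present bias `β`:
the weight of the first edge plus `β` times the total weight of the rest. -/
def perceived (w : V → V → ℝ) (β : ℝ) (p : List V) : ℝ :=
  match p.zip p.tail with
  | [] => 0
  | e :: es => w e.1 e.2 + β * ((es.map fun e' => w e'.1 e'.2).sum)

/-- The edge `a → b` is a feasible transition (towards target `t`): it is the
first edge of some `a`–`t` path whose perceived cost is minimum among all
`a`–`t` paths. -/
def FeasibleStep (E : V → V → Prop) (w : V → V → ℝ) (β : ℝ) (t : V) (a b : V) : Prop :=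
  E a b ∧ ∃ q : List V, IsPathOn E a t (a :: b :: q) ∧
    ∀ r : List V, IsPathOn E a t r → perceived w β (a :: b :: q) ≤ perceived w β r

/-- A feasible `s`–`t` path: every edge on it is a feasible transition from its tail. -/
def FeasPath (E : V → V → Prop) (w : V → V → ℝ) (β : ℝ) (s t : V) (p : List V) : Prop :=
  IsPathOn E s t p ∧ p.Chain' (FeasibleStep E w β t)

/-- The directed graph is acyclic: no directed cycle. -/
def NoDirCycle (E : V → V → Prop) : Prop := ∀ v, ¬ Relation.TransGen E v v

/-- Vertices of the diamond-chain graph built on `n` diamonds: `v i` for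
`i ∈ {0,…,n}` and, for each diamond `i ∈ {1,…,n}` (indexed by `Fin n`,
diamond `i` ↔ index `i-1`), the two middle vertices `u (i-1) true = u_i`
(upper branch) and `u (i-1) false = u'_i` (lower branch). -/
inductive DV (n : ℕ) : Type
  | v (i : Fin (n + 1))
  | u (i : Fin n) (upper : Bool)

/-- Edges of the diamond-chain graph:
`v_{i-1} → u_i`, `v_{i-1} → u'_i`, `u_i → v_i`, `u'_i → v_i`. -/
def DE (n : ℕ) : DV n → DV n → Prop
  | DV.v j, DV.u i _ => (j : ℕ) = (i : ℕ)
  | DV.u i _, DV.v j => (j : ℕ) = (i : ℕ) + 1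
  | _, _ => False

/-- Edge weights of the diamond-chain graph built from the integers `sv i`
(`s_i` of the paper), `W` and present bias `β`:
`v_{i-1}→u_i` has weight `s_i`, `u_i→v_i` has weight `(W-s_i)/β`,
`v_{i-1}→u'_i` has weight `-s_i`, and `u'_i→v_i` has weight `(W+s_i)/β`. -/
noncomputable def Dw (n : ℕ) (sv : Fin n → ℤ) (W : ℤ) (β : ℝ) : DV n → DV n → ℝ
  | DV.v _, DV.u i true => (sv i : ℝ)
  | DV.v _, DV.u i false => -(sv i : ℝ)
  | DV.u i true, DV.v _ => ((W : ℝ) - (sv i : ℝ)) / β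
  | DV.u i false, DV.v _ => ((W : ℝ) + (sv i : ℝ)) / β
  | _, _ => 0

/-- The `s`–`t` path of the diamond-chain graph that goes through the upper
vertex `u_i` exactly for the indices `i` with `f (i-1) = true` (i.e. `i ∈ A`),
and through `u'_i` otherwise. -/
def Dpath (n : ℕ) (f : Fin n → Bool) : List (DV n) :=
  ((List.finRange n).flatMap fun i => [DV.v i.castSucc, DV.u i (f i)]) ++ [DV.v (Fin.last n)]

section Aux

/-- Suffix of the canonical diamond path starting at `v j`. -/
def sfx {n : ℕ} (g : Fin n → Bool) (j : ℕ) : List (DV n) :=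
  (((List.finRange n).drop j).flatMap fun i => [DV.v i.castSucc, DV.u i (g i)]) ++
    [DV.v (Fin.last n)]

lemma sfx_zero {n : ℕ} (g : Fin n → Bool) : sfx g 0 = Dpath n g := rfl

lemma sfx_ge {n : ℕ} (g : Fin n → Bool) {j : ℕ} (h : n ≤ j) :
    sfx g j = [DV.v (Fin.last n)] := by
  have : (List.finRange n).drop j = [] :=
    List.drop_eq_nil_of_le (by simpa using h)
  simp [sfx, this]

lemma sfx_lt {n : ℕ} (g : Fin n → Bool) {j : ℕ} (hj : j < n) :
    sfx g j = DV.v ((⟨j, hj⟩ : Fin n).castSucc) :: DV.u ⟨j, hj⟩ (g ⟨j, hj⟩) ::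
      sfx g (j + 1) := by
  have hdrop : (List.finRange n).drop j = ⟨j, hj⟩ :: (List.finRange n).drop (j + 1) := by
    rw [List.drop_eq_getElem_cons (by simpa using hj)]
    simp
  simp [sfx, hdrop]

lemma mem_drop_finRange {n j : ℕ} {i : Fin n} (h : i ∈ (List.finRange n).drop j) :
    j ≤ (i : ℕ) := by
  obtain ⟨k, hk, hik⟩ := List.mem_iff_getElem.mp h
  rw [List.getElem_drop] at hik
  subst hik
  simp

lemma sfx_congr {n : ℕ} {g g' : Fin n → Bool} {j : ℕ}
    (h : ∀ i : Fin n, j ≤ (i : ℕ) → g i = g' i) : sfx g j = sfx g' j := by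
  unfold sfx
  congr 1
  apply List.flatMap_congr
  intro i hi
  rw [h i (mem_drop_finRange hi)]

end Aux
section Aux2

lemma mem_sfx {n : ℕ} {g : Fin n → Bool} {j : ℕ} (hj : j ≤ n) {x : DV n}
    (hx : x ∈ sfx g j) :
    (∃ k : Fin (n+1), x = DV.v k ∧ j ≤ (k : ℕ)) ∨
    (∃ (i : Fin n) (b : Bool), x = DV.u i b ∧ j ≤ (i : ℕ)) := by
  unfold sfx at hx
  rcases List.mem_append.mp hx with hx | hx
  · obtain ⟨i, hi, hmem⟩ := List.mem_flatMap.mp hx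
    have hji := mem_drop_finRange hi
    rcases List.mem_pair.mp hmem with rfl | rfl
    · exact Or.inl ⟨i.castSucc, rfl, by simpa using hji⟩
    · exact Or.inr ⟨i, g i, rfl, hji⟩
  · simp only [List.mem_singleton] at hx
    exact Or.inl ⟨Fin.last n, hx, by simpa using hj⟩

lemma sfx_chain' {n : ℕ} (g : Fin n → Bool) :
    ∀ m j, n - j ≤ m → (sfx g j).Chain' (DE n) := by
  intro m
  induction m with
  | zero =>
    intro j hj
    rw [sfx_ge g (by omega)]
    exact List.isChain_singleton _
  | succ m ih =>
    intro j hj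
    by_cases hjn : n ≤ j
    · rw [sfx_ge g hjn]; exact List.isChain_singleton _
    · push_neg at hjn
      rw [sfx_lt g hjn]
      refine List.IsChain.cons_cons (by simp [DE]) ?_
      have htail := ih (j+1) (by omega)
      by_cases hj1 : j + 1 < n
      · rw [sfx_lt g hj1] at htail ⊢
        exact List.IsChain.cons_cons (by simp [DE]) htail
      · rw [sfx_ge g (by omega)] at htail ⊢
        refine List.IsChain.cons_cons ?_ htail
        show (Fin.last n : ℕ) = j + 1
        simp; omega

lemma sfx_nodup {n : ℕ} (g : Fin n → Bool) :
    ∀ m j, n - j ≤ m → (sfx g j).Nodup := by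
  intro m
  induction m with
  | zero =>
    intro j hj
    rw [sfx_ge g (by omega)]; simp
  | succ m ih =>
    intro j hj
    by_cases hjn : n ≤ j
    · rw [sfx_ge g hjn]; simp
    · push_neg at hjn
      rw [sfx_lt g hjn]
      refine List.Nodup.cons ?_ (List.Nodup.cons ?_ (ih (j+1) (by omega)))
      · intro hmem
        rcases List.mem_cons.mp hmem with h | h
        · exact absurd h (by simp)
        · rcases mem_sfx (by omega) h with ⟨k, hk, hjk⟩ | ⟨i, b, hb, _⟩
          · have hkv : (⟨j, hjn⟩ : Fin n).castSucc = k := DV.v.inj hk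
            have : j = (k : ℕ) := by simpa using congrArg Fin.val hkv
            omega
          · exact absurd hb (by simp)
      · intro hmem
        rcases mem_sfx (by omega) hmem with ⟨k, hk, _⟩ | ⟨i, b, hb, hji⟩
        · exact absurd hk (by simp)
        · have : (⟨j, hjn⟩ : Fin n) = i := (DV.u.inj hb).1
          have : ((⟨j, hjn⟩ : Fin n) : ℕ) = (i : ℕ) := congrArg Fin.val this
          simp at this; omega

lemma sfx_getLast? {n : ℕ} (g : Fin n → Bool) (j : ℕ) :
    (sfx g j).getLast? = some (DV.v (Fin.last n)) := by
  unfold sfx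
  rw [List.getLast?_concat]

lemma sfx_head?_zero {n : ℕ} (g : Fin n → Bool) :
    (sfx g 0).head? = some (DV.v 0) := by
  by_cases hn : 0 < n
  · rw [sfx_lt g hn]
    simp [Fin.ext_iff]
  · have : n = 0 := by omega
    subst this
    rw [sfx_ge g le_rfl]
    rfl

end Aux2
section Aux3

lemma char_base {n : ℕ} {j : Fin (n+1)} (hjn : (j : ℕ) = n) {p : List (DV n)}
    (hchain : p.Chain' (DE n)) (hhead : p.head? = some (DV.v j))
    (hlast : p.getLast? = some (DV.v (Fin.last n))) :
    ∃ g : Fin n → Bool, p = sfx g (j : ℕ) := by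
  match p with
  | [] => simp at hhead
  | a :: rest =>
    have ha : a = DV.v j := by simpa using hhead
    subst ha
    match rest with
    | [] =>
      refine ⟨fun _ => false, ?_⟩
      rw [sfx_ge _ (le_of_eq hjn.symm)]
      simp only [List.getLast?_singleton, Option.some.injEq] at hlast
      rw [hlast]
    | x :: rest2 =>
      have hDE : DE n (DV.v j) x := (List.isChain_cons_cons.mp hchain).1
      match x with
      | DV.v _ => exact absurd hDE (by simp [DE])
      | DV.u i b =>
        have h1 : (j : ℕ) = (i : ℕ) := hDE
        have h2 := i.isLt
        omega

lemma char_aux {n : ℕ} :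
    ∀ m : ℕ, ∀ j : Fin (n+1), n - (j : ℕ) ≤ m →
    ∀ p : List (DV n), p.Chain' (DE n) → p.head? = some (DV.v j) →
      p.getLast? = some (DV.v (Fin.last n)) → ∃ g : Fin n → Bool, p = sfx g (j : ℕ) := by
  intro m
  induction m with
  | zero =>
    intro j hj p hchain hhead hlast
    exact char_base (by have := j.isLt; omega) hchain hhead hlast
  | succ m ih =>
    intro j hj p hchain hhead hlast
    by_cases hjn : n ≤ (j : ℕ)
    · exact char_base (by have := j.isLt; omega) hchain hhead hlast
    · push_neg at hjn
      match p with
      | [] => simp at hhead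
      | a :: rest =>
        have ha : a = DV.v j := by simpa using hhead
        subst ha
        match rest with
        | [] =>
          simp only [List.getLast?_singleton, Option.some.injEq] at hlast
          have : (j : ℕ) = n := by
            have := DV.v.inj hlast
            rw [this]; rfl
          omega
        | x :: rest2 =>
          have hDE : DE n (DV.v j) x := (List.isChain_cons_cons.mp hchain).1
          match x with
          | DV.v _ => exact absurd hDE (by simp [DE])
          | DV.u i b =>
            have hij : (j : ℕ) = (i : ℕ) := hDE
            match rest2 with
            | [] =>
              rw [show (DV.v j :: [DV.u i b]).getLast? = some (DV.u i b) by rfl] at hlast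
              simp at hlast
            | y :: rest3 =>
              have hDE2 : DE n (DV.u i b) y :=
                ((List.isChain_cons_cons.mp hchain).2.rel_head)
              match y with
              | DV.u _ _ => exact absurd hDE2 (by simp [DE])
              | DV.v k =>
                have hk : (k : ℕ) = (i : ℕ) + 1 := hDE2
                have hchain3 : (DV.v k :: rest3).Chain' (DE n) :=
                  ((List.isChain_cons_cons.mp hchain).2).tail
                have hlast3 : (DV.v k :: rest3).getLast? = some (DV.v (Fin.last n)) := by
                  rwa [List.getLast?_cons_cons, List.getLast?_cons_cons] at hlast
                obtain ⟨g, hg⟩ := ih k (by omega) (DV.v k :: rest3) hchain3 rfl hlast3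
                have hjn' : (j : ℕ) < n := hjn
                refine ⟨Function.update g ⟨(j : ℕ), hjn'⟩ b, ?_⟩
                rw [sfx_lt _ hjn']
                rw [Function.update_self]
                have h2 : sfx g ((j : ℕ) + 1) =
                    sfx (Function.update g ⟨(j : ℕ), hjn'⟩ b) ((j : ℕ) + 1) := by
                  apply sfx_congr
                  intro i' hi'
                  rw [Function.update_of_ne]
                  intro hcon
                  have : (i' : ℕ) = (j : ℕ) := by rw [hcon]
                  omega
                have hjcast : DV.v ((⟨(j : ℕ), hjn'⟩ : Fin n).castSucc) = DV.v j := by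
                  simp [Fin.ext_iff]
                have hib : DV.u (⟨(j : ℕ), hjn'⟩ : Fin n) b = DV.u i b := by
                  congr 1
                  exact Fin.ext (by simpa using hij)
                rw [hjcast, hib, ← h2, hg, show (k : ℕ) = (j : ℕ) + 1 from by omega]

end Aux3
section Aux4

lemma pathCost_cons_cons {V : Type*} (w : V → V → ℝ) (a b : V) (l : List V) :
    pathCost w (a :: b :: l) = w a b + pathCost w (b :: l) := by
  simp [pathCost]

lemma pathCost_singleton {V : Type*} (w : V → V → ℝ) (a : V) :
    pathCost w [a] = 0 := by
  simp [pathCost]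

lemma cost_aux {n : ℕ} (sv : Fin n → ℤ) (W : ℤ) (β : ℝ) (g : Fin n → Bool) :
    ∀ l : List (Fin n),
      pathCost (Dw n sv W β)
        ((l.flatMap fun i => [DV.v i.castSucc, DV.u i (g i)]) ++ [DV.v (Fin.last n)]) =
      (l.map fun i => if g i then ((sv i : ℝ) + ((W : ℝ) - (sv i : ℝ)) / β)
        else (-(sv i : ℝ) + ((W : ℝ) + (sv i : ℝ)) / β)).sum := by
  intro l
  induction l with
  | nil => simpa using pathCost_singleton (Dw n sv W β) (DV.v (Fin.last n) : DV n)
  | cons i l' ih =>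
    rw [List.flatMap_cons]
    match l' with
    | [] =>
      cases hb : g i <;>
        simp [pathCost_cons_cons, pathCost_singleton, Dw, hb]
    | i' :: l'' =>
      have hstep : ((([DV.v i.castSucc, DV.u i (g i)] : List (DV n)) ++
          ((i' :: l'').flatMap fun i => [DV.v i.castSucc, DV.u i (g i)])) ++
            [DV.v (Fin.last n)]) =
          DV.v i.castSucc :: DV.u i (g i) :: DV.v i'.castSucc ::
            ((DV.u i' (g i') :: (l''.flatMap fun i => [DV.v i.castSucc, DV.u i (g i)])) ++
              [DV.v (Fin.last n)]) := by
        simp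
      rw [hstep, pathCost_cons_cons, pathCost_cons_cons]
      have hrest : (DV.v i'.castSucc :: ((DV.u i' (g i') ::
          (l''.flatMap fun i => [DV.v i.castSucc, DV.u i (g i)])) ++ [DV.v (Fin.last n)])) =
          (((i' :: l'').flatMap fun i => [DV.v i.castSucc, DV.u i (g i)]) ++
            [DV.v (Fin.last n)]) := by
        simp
      rw [hrest, ih]
      cases hb : g i <;> simp [Dw, hb] <;> ring

lemma Dpath_inj {n : ℕ} : Function.Injective (Dpath n) := by
  intro f f' hff
  funext i
  have hmem : DV.u i (f i) ∈ Dpath n f := by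
    unfold Dpath
    refine List.mem_append.mpr (Or.inl ?_)
    exact List.mem_flatMap.mpr ⟨i, by simp, by simp⟩
  rw [hff] at hmem
  unfold Dpath at hmem
  rcases List.mem_append.mp hmem with h | h
  · obtain ⟨i', _, hmem'⟩ := List.mem_flatMap.mp h
    rcases List.mem_pair.mp hmem' with h' | h'
    · exact absurd h' (by simp)
    · obtain ⟨h1, h2⟩ := DV.u.inj h'
      rw [h2, h1]
  · simp at h

end Aux4
/-- In the diamond-chain graph: for every subset
`A ⊆ {1,…,n}` (encoded as `f : Fin n → Bool`) the corresponding `s`–`t` path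
has cost `∑_{i∈A}(s_i + (W-s_i)/β) + ∑_{i∉A}(-s_i + (W+s_i)/β)`, and this cost
equals `n·W/β` iff `∑_{i∈A} s_i = ∑_{i∉A} s_i`.  Consequently the number of
directed `s`–`t` paths of cost exactly `n·W/β` equals the number of subsets
`A ⊆ {1,…,n}` with `∑_{i∈A} s_i = ∑_{i∉A} s_i`. -/
theorem stmt4 (n : ℕ) (sv : Fin n → ℤ) (hs : ∀ i, 0 < sv i)
    (W : ℤ) (hW : ∀ i, sv i < W) (β : ℝ) (hβ0 : 0 < β) (hβ1 : β < 1) :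
    (∀ f : Fin n → Bool,
      pathCost (Dw n sv W β) (Dpath n f) =
        (∑ i ∈ Finset.univ.filter fun i => f i = true,
            ((sv i : ℝ) + ((W : ℝ) - (sv i : ℝ)) / β)) +
        (∑ i ∈ Finset.univ.filter fun i => f i = false,
            (-(sv i : ℝ) + ((W : ℝ) + (sv i : ℝ)) / β)) ∧
      (pathCost (Dw n sv W β) (Dpath n f) = (n : ℝ) * (W : ℝ) / β ↔
        ∑ i ∈ Finset.univ.filter fun i => f i = true, sv i =
          ∑ i ∈ Finset.univ.filter fun i => f i = false, sv i)) ∧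
    {p : List (DV n) | IsPathOn (DE n) (DV.v 0) (DV.v (Fin.last n)) p ∧
        pathCost (Dw n sv W β) p = (n : ℝ) * (W : ℝ) / β}.ncard =
      {A : Finset (Fin n) | ∑ i ∈ A, sv i = ∑ i ∈ Aᶜ, sv i}.ncard := by
  have hβ : β ≠ 0 := ne_of_gt hβ0
  have hβ1' : (1 : ℝ) - 1 / β ≠ 0 := by
    have : 1 < 1 / β := one_lt_one_div hβ0 hβ1
    intro h; rw [sub_eq_zero] at h; rw [← h] at this; exact lt_irrefl _ this
  -- total cost as a sum over Fin n
  have hcost : ∀ f : Fin n → Bool, pathCost (Dw n sv W β) (Dpath n f) =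
      ∑ i : Fin n, (if f i then ((sv i : ℝ) + ((W : ℝ) - (sv i : ℝ)) / β)
        else (-(sv i : ℝ) + ((W : ℝ) + (sv i : ℝ)) / β)) := by
    intro f
    have h := cost_aux sv W β f (List.finRange n)
    unfold Dpath
    rw [h, Fin.sum_univ_def]
  -- split form
  have hsplit : ∀ f : Fin n → Bool, pathCost (Dw n sv W β) (Dpath n f) =
      (∑ i ∈ Finset.univ.filter fun i => f i = true,
          ((sv i : ℝ) + ((W : ℝ) - (sv i : ℝ)) / β)) +
      (∑ i ∈ Finset.univ.filter fun i => f i = false,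
          (-(sv i : ℝ) + ((W : ℝ) + (sv i : ℝ)) / β)) := by
    intro f
    rw [hcost f, ← Finset.sum_filter_add_sum_filter_not Finset.univ (fun i => f i = true)]
    congr 1
    · exact Finset.sum_congr rfl (fun i hi => by
        simp [(Finset.mem_filter.mp hi).2])
    · refine Finset.sum_congr ?_ (fun i hi => ?_)
      · apply Finset.filter_congr; intro i _; simp
      · have h2 := (Finset.mem_filter.mp hi).2
        simp [h2]
  -- closed form with difference
  have hkey : ∀ f : Fin n → Bool, pathCost (Dw n sv W β) (Dpath n f) =
      (((∑ i ∈ Finset.univ.filter fun i => f i = true, sv i) -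
        (∑ i ∈ Finset.univ.filter fun i => f i = false, sv i) : ℤ) : ℝ) * (1 - 1 / β) +
        (n : ℝ) * (W : ℝ) / β := by
    intro f
    rw [hcost f]
    have hc : ∀ i : Fin n,
        (if f i then ((sv i : ℝ) + ((W : ℝ) - (sv i : ℝ)) / β)
          else (-(sv i : ℝ) + ((W : ℝ) + (sv i : ℝ)) / β)) =
        (if f i then ((sv i : ℝ)) else -(sv i : ℝ)) * (1 - 1 / β) + (W : ℝ) / β := by
      intro i
      cases f i <;> simp <;> field_simp <;> ring
    rw [Finset.sum_congr rfl (fun i _ => hc i)]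
    rw [Finset.sum_add_distrib, ← Finset.sum_mul, Finset.sum_const, Finset.card_univ,
      Fintype.card_fin]
    have hd : (∑ i : Fin n, if f i then ((sv i : ℝ)) else -(sv i : ℝ)) =
        (((∑ i ∈ Finset.univ.filter fun i => f i = true, sv i) -
          (∑ i ∈ Finset.univ.filter fun i => f i = false, sv i) : ℤ) : ℝ) := by
      rw [← Finset.sum_filter_add_sum_filter_not Finset.univ (fun i => f i = true)]
      push_cast
      congr 1
      · exact Finset.sum_congr rfl (fun i hi => by simp [(Finset.mem_filter.mp hi).2])
      · rw [← Finset.sum_neg_distrib]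
        refine Finset.sum_congr ?_ (fun i hi => ?_)
        · apply Finset.filter_congr; intro i _; simp
        · have h2 := (Finset.mem_filter.mp hi).2
          simp [h2]
    rw [hd]
    push_cast
    ring
  -- the iff
  have hiff : ∀ f : Fin n → Bool,
      (pathCost (Dw n sv W β) (Dpath n f) = (n : ℝ) * (W : ℝ) / β ↔
        ∑ i ∈ Finset.univ.filter fun i => f i = true, sv i =
          ∑ i ∈ Finset.univ.filter fun i => f i = false, sv i) := by
    intro f
    rw [hkey f]
    constructor
    · intro h
      have h0 : (((∑ i ∈ Finset.univ.filter fun i => f i = true, sv i) -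
          (∑ i ∈ Finset.univ.filter fun i => f i = false, sv i) : ℤ) : ℝ) * (1 - 1 / β) = 0 := by
        linarith
      rcases mul_eq_zero.mp h0 with h1 | h1
      · have := sub_eq_zero.mp (by exact_mod_cast h1)
        exact this
      · exact absurd h1 hβ1'
    · intro h
      rw [h]
      simp
  -- every s-t path is a Dpath
  have hIs : ∀ f : Fin n → Bool,
      IsPathOn (DE n) (DV.v 0) (DV.v (Fin.last n)) (Dpath n f) := by
    intro f
    refine ⟨?_, ?_, ?_, ?_⟩
    · rw [← sfx_zero f]; exact sfx_head?_zero f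
    · rw [← sfx_zero f]; exact sfx_getLast? f 0
    · rw [← sfx_zero f]; exact sfx_chain' f n 0 (by omega)
    · rw [← sfx_zero f]; exact sfx_nodup f n 0 (by omega)
  have hchar : ∀ p : List (DV n),
      IsPathOn (DE n) (DV.v 0) (DV.v (Fin.last n)) p → ∃ f, p = Dpath n f := by
    rintro p ⟨h1, h2, h3, h4⟩
    obtain ⟨g, hg⟩ := char_aux n (0 : Fin (n+1)) (by simp) p h3 h1 h2
    refine ⟨g, ?_⟩
    rw [hg, show ((0 : Fin (n+1)) : ℕ) = 0 from rfl, sfx_zero]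
  refine ⟨fun f => ⟨hsplit f, hiff f⟩, ?_⟩
  -- counting
  have hPeq : {p : List (DV n) | IsPathOn (DE n) (DV.v 0) (DV.v (Fin.last n)) p ∧
      pathCost (Dw n sv W β) p = (n : ℝ) * (W : ℝ) / β} =
      Dpath n '' {f : Fin n → Bool |
        ∑ i ∈ Finset.univ.filter fun i => f i = true, sv i =
          ∑ i ∈ Finset.univ.filter fun i => f i = false, sv i} := by
    ext p
    simp only [Set.mem_setOf_eq, Set.mem_image]
    constructor
    · rintro ⟨h1, h2⟩
      obtain ⟨f, rfl⟩ := hchar p h1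
      exact ⟨f, (hiff f).mp h2, rfl⟩
    · rintro ⟨f, hf, rfl⟩
      exact ⟨hIs f, (hiff f).mpr hf⟩
  rw [hPeq, Set.ncard_image_of_injective _ Dpath_inj]
  have hQeq : {f : Fin n → Bool |
      ∑ i ∈ Finset.univ.filter fun i => f i = true, sv i =
        ∑ i ∈ Finset.univ.filter fun i => f i = false, sv i} =
      (fun (A : Finset (Fin n)) (i : Fin n) => decide (i ∈ A)) ''
        {A : Finset (Fin n) | ∑ i ∈ A, sv i = ∑ i ∈ Aᶜ, sv i} := by
    ext f
    simp only [Set.mem_setOf_eq, Set.mem_image]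
    constructor
    · intro hf
      refine ⟨Finset.univ.filter (fun i => f i = true), ?_, ?_⟩
      · have hAc : (Finset.univ.filter (fun i => f i = true))ᶜ =
            Finset.univ.filter (fun i => f i = false) := by
          ext i; simp [Bool.not_eq_true]
        rw [hAc]
        exact hf
      · funext i; simp
    · rintro ⟨A, hA, rfl⟩
      have h1 : (Finset.univ.filter fun i => decide (i ∈ A) = true) = A := by
        ext i; simp
      have h2 : (Finset.univ.filter fun i => decide (i ∈ A) = false) = Aᶜ := by
        ext i; simp
      rw [h1, h2]
      exact hA
  rw [hQeq, Set.ncard_image_of_injective]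
  intro A B hAB
  ext i
  have := congrFun hAB i
  simpa using this
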